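/- Let |ψ⟩^{RAB} = Σ_{l=0}^{D−1} √λ_l |l⟩^R ⊗ |ψ_l⟩^{AB} be a Schmidt decomposition with all λ_l > 0, and let M be a quantum channel on B(H_A ⊗ H_B ⊗ H_X) (X an auxiliary system) acting trivially on R. Then M achieves (id^R ⊗ M)(ψ^{RAB} ⊗ Φ) = ψ'^{RAB} ⊗ Φ' (where ψ' is the state with A-part moved, Φ, Φ' fixed resource states) if and only if M(|ψ_l⟩⟨ψ_{l'}| ⊗ Φ) = |ψ'_l⟩⟨ψ'_{l'}| ⊗ Φ' for all l, l'. In particular, M achieves the transformation for |ψ⟩ if and only if it achieves it for the corresponding maximally entangled state D^{-1/2} Σ_l |l⟩^R ⊗ |ψ_l⟩^{AB}. -/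

import Mathlib

open Matrix Kronecker Finset
open scoped ComplexConjugate Classical ComplexOrder

noncomputable section

/-- Density matrix (outer product) of a vector. -/
def dmv {n : Type*} (v : n → ℂ) : Matrix n n ℂ :=
  Matrix.of fun i j => v i * conj (v j)

/-- Outer product `|u⟩⟨v|`. -/
def outer {n : Type*} (u v : n → ℂ) : Matrix n n ℂ :=
  Matrix.of fun i j => u i * conj (v j)

/-- Largest eigenvalue of a (Hermitian) matrix. -/
def maxEig {n : Type*} [Fintype n] [DecidableEq n] (A : Matrix n n ℂ) : ℝ :=
  if h : A.IsHermitian then ⨆ i, h.eigenvalues i else 0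

/-- Sum of the `k` largest eigenvalues of a Hermitian matrix. -/
def topSum {n : Type*} [Fintype n] [DecidableEq n] (A : Matrix n n ℂ) (k : ℕ) : ℝ :=
  if h : A.IsHermitian then
    sSup {x : ℝ | ∃ s : Finset n, s.card = k ∧ x = ∑ i ∈ s, h.eigenvalues i}
  else 0

/-- Majorization of Hermitian operators: `A ≺ B` (possibly on different spaces):
every partial sum of the `k` largest eigenvalues of `A` is at most that of `B`,
and the traces agree. -/
def Maj {m n : Type*} [Fintype m] [DecidableEq m] [Fintype n] [DecidableEq n]
    (A : Matrix m m ℂ) (B : Matrix n n ℂ) : Prop :=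
  (∀ k : ℕ, topSum A k ≤ topSum B k) ∧ A.trace = B.trace

/-- Total matrix square root: the positive square root for PSD matrices, `0` otherwise. -/
def msqrt {n : Type*} [Fintype n] [DecidableEq n] (A : Matrix n n ℂ) : Matrix n n ℂ :=
  if h : A.PosSemidef then
    (h.1.eigenvectorUnitary : Matrix n n ℂ) *
      diagonal ((↑) ∘ Real.sqrt ∘ h.1.eigenvalues) * (star h.1.eigenvectorUnitary : Matrix n n ℂ)
  else 0

/-- Trace norm (sum of singular values). -/
def traceNorm {n : Type*} [Fintype n] [DecidableEq n] (A : Matrix n n ℂ) : ℝ :=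
  ((msqrt (Aᴴ * A)).trace).re

/-- Fidelity `F(ρ,σ) = ‖√ρ √σ‖₁`. -/
def fid {n : Type*} [Fintype n] [DecidableEq n] (ρ σ : Matrix n n ℂ) : ℝ :=
  traceNorm (msqrt ρ * msqrt σ)

/-- Purified distance `P(ρ,σ) = √(1 − F²(ρ,σ))`. -/
def pd {n : Type*} [Fintype n] [DecidableEq n] (ρ σ : Matrix n n ℂ) : ℝ :=
  Real.sqrt (1 - fid ρ σ ^ 2)

/-- Choi matrix of a map on matrices. -/
def choi {m n : Type*} [Fintype m] [DecidableEq m]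
    (N : Matrix m m ℂ → Matrix n n ℂ) : Matrix (m × n) (m × n) ℂ :=
  Matrix.of fun p q => N (Matrix.single p.1 q.1 1) p.2 q.2

/-- A map is mixed-unitary if it is a convex combination of unitary conjugations. -/
def IsMixedUnitary {n : Type*} [Fintype n] [DecidableEq n]
    (N : Matrix n n ℂ → Matrix n n ℂ) : Prop :=
  ∃ (m : ℕ) (p : Fin m → ℝ) (U : Fin m → Matrix n n ℂ),
    (∀ i, 0 ≤ p i) ∧ (∑ i, p i = 1) ∧ (∀ i, U i ∈ Matrix.unitaryGroup n ℂ) ∧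
    ∀ ρ, N ρ = ∑ i, (p i : ℂ) • (U i * ρ * (U i)ᴴ)

/-- `id_R ⊗ M` acting blockwise on a matrix on `R × S`. -/
def idTensor {R S T : Type*} (M : Matrix S S ℂ →ₗ[ℂ] Matrix T T ℂ)
    (ρ : Matrix (R × S) (R × S) ℂ) : Matrix (R × T) (R × T) ℂ :=
  Matrix.of fun p q => M (Matrix.of fun s s' => ρ (p.1, s) (q.1, s')) p.2 q.2

end
lemma key_lemma {Rt AB X AB' X' : Type*}
    [Fintype Rt] [DecidableEq Rt] [Fintype AB] [DecidableEq AB]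
    [Fintype X] [DecidableEq X] [Fintype AB'] [DecidableEq AB']
    [Fintype X'] [DecidableEq X']
    (D : ℕ) (c : Fin D → ℂ) (hc : ∀ l, c l ≠ 0)
    (e : Fin D → Rt → ℂ)
    (he : ∀ l l', ∑ r, conj (e l r) * e l' r = if l = l' then 1 else 0)
    (f : Fin D → AB → ℂ) (g : Fin D → AB' → ℂ)
    (Φ : Matrix X X ℂ) (Φ' : Matrix X' X' ℂ)
    (M : Matrix (AB × X) (AB × X) ℂ →ₗ[ℂ] Matrix (AB' × X') (AB' × X') ℂ) :
    (idTensor M (Matrix.of fun p q : Rt × (AB × X) =>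
        (∑ l, c l * e l p.1 * f l p.2.1) * conj (∑ l, c l * e l q.1 * f l q.2.1) *
          Φ p.2.2 q.2.2) =
      Matrix.of fun p q : Rt × (AB' × X') =>
        (∑ l, c l * e l p.1 * g l p.2.1) * conj (∑ l, c l * e l q.1 * g l q.2.1) *
          Φ' p.2.2 q.2.2) ↔
      ∀ l l', M (Matrix.of fun s s' : AB × X => f l s.1 * conj (f l' s'.1) * Φ s.2 s'.2) =
        Matrix.of fun t t' : AB' × X' => g l t.1 * conj (g l' t'.1) * Φ' t.2 t'.2 := by
  set F : Fin D → Fin D → Matrix (AB × X) (AB × X) ℂ :=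
    fun l l' => Matrix.of fun s s' : AB × X => f l s.1 * conj (f l' s'.1) * Φ s.2 s'.2 with hF
  set G : Fin D → Fin D → Matrix (AB' × X') (AB' × X') ℂ :=
    fun l l' => Matrix.of fun t t' : AB' × X' => g l t.1 * conj (g l' t'.1) * Φ' t.2 t'.2 with hG
  -- orthonormality in the other order
  have he2 : ∀ l l', ∑ r, e l r * conj (e l' r) = if l = l' then 1 else 0 := by
    intro l l'
    have h := congrArg conj (he l l')
    rw [map_sum, apply_ite (starRingEnd ℂ), _root_.map_one, _root_.map_zero] at h
    simpa [_root_.map_mul] using h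
  -- contraction lemmas
  have h1 : ∀ (v : Fin D → ℂ) (m : Fin D), ∑ r, conj (e m r) * ∑ l, e l r * v l = v m := by
    intro v m
    have : ∑ r, conj (e m r) * ∑ l, e l r * v l
        = ∑ l, (∑ r, conj (e m r) * e l r) * v l := by
      simp only [Finset.mul_sum, Finset.sum_mul]
      rw [Finset.sum_comm]
      exact Finset.sum_congr rfl fun l _ => Finset.sum_congr rfl fun r _ => by ring
    rw [this]
    simp [he]
  have h2 : ∀ (w : Fin D → ℂ) (m : Fin D), ∑ r, e m r * ∑ l, conj (e l r) * w l = w m := by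
    intro w m
    have : ∑ r, e m r * ∑ l, conj (e l r) * w l
        = ∑ l, (∑ r, e m r * conj (e l r)) * w l := by
      simp only [Finset.mul_sum, Finset.sum_mul]
      rw [Finset.sum_comm]
      exact Finset.sum_congr rfl fun l _ => Finset.sum_congr rfl fun r _ => by ring
    rw [this]
    simp [he2]
  -- entrywise expansion of the LHS of the merging equation
  have hLHS : ∀ p q : Rt × (AB' × X'),
      (idTensor M (Matrix.of fun p q : Rt × (AB × X) =>
        (∑ l, c l * e l p.1 * f l p.2.1) * conj (∑ l, c l * e l q.1 * f l q.2.1) *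
          Φ p.2.2 q.2.2)) p q
      = ∑ l, ∑ l', (c l * e l p.1 * conj (c l' * e l' q.1)) * (M (F l l')) p.2 q.2 := by
    intro p q
    have hblock : (Matrix.of fun s s' : AB × X =>
        (∑ l, c l * e l p.1 * f l s.1) * conj (∑ l, c l * e l q.1 * f l s'.1) * Φ s.2 s'.2)
        = ∑ l, ∑ l', (c l * e l p.1 * conj (c l' * e l' q.1)) • F l l' := by
      ext s s'
      simp only [Matrix.sum_apply, Matrix.smul_apply, Matrix.of_apply, smul_eq_mul, hF,
        map_sum, _root_.map_mul, Finset.sum_mul, Finset.mul_sum]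
      rw [Finset.sum_comm]
      refine Finset.sum_congr rfl fun l _ => Finset.sum_congr rfl fun l' _ => ?_
      ring
    simp only [idTensor, Matrix.of_apply]
    rw [hblock]
    simp [Matrix.sum_apply]
  -- entrywise expansion of the RHS of the merging equation
  have hRHS : ∀ p q : Rt × (AB' × X'),
      (Matrix.of fun p q : Rt × (AB' × X') =>
        (∑ l, c l * e l p.1 * g l p.2.1) * conj (∑ l, c l * e l q.1 * g l q.2.1) *
          Φ' p.2.2 q.2.2) p q
      = ∑ l, ∑ l', (c l * e l p.1 * conj (c l' * e l' q.1)) * (G l l') p.2 q.2 := by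
    intro p q
    simp only [Matrix.of_apply, hG, map_sum, _root_.map_mul, Finset.sum_mul, Finset.mul_sum]
    rw [Finset.sum_comm]
    refine Finset.sum_congr rfl fun l _ => Finset.sum_congr rfl fun l' _ => ?_
    ring
  constructor
  · intro h m m'
    ext t t'
    have hentry : ∀ p1 q1 : Rt,
        ∑ l, ∑ l', (c l * e l p1 * conj (c l' * e l' q1)) * (M (F l l')) t t'
        = ∑ l, ∑ l', (c l * e l p1 * conj (c l' * e l' q1)) * (G l l') t t' := by
      intro p1 q1
      have := congrFun (congrFun h (p1, t)) (q1, t')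
      rw [hLHS (p1, t) (q1, t'), hRHS (p1, t) (q1, t')] at this
      exact this
    -- contract against e m, e m'
    have contract : ∀ (A : Fin D → Fin D → ℂ),
        (∑ q1, e m' q1 * ∑ p1, conj (e m p1) *
          ∑ l, ∑ l', (c l * e l p1 * conj (c l' * e l' q1)) * A l l')
        = c m * conj (c m') * A m m' := by
      intro A
      have step1 : ∀ q1 : Rt,
          (∑ p1, conj (e m p1) * ∑ l, ∑ l', (c l * e l p1 * conj (c l' * e l' q1)) * A l l')
          = ∑ l', c m * conj (c l' * e l' q1) * A m l' := by
        intro q1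
        have := h1 (fun l => ∑ l', c l * conj (c l' * e l' q1) * A l l') m
        rw [← this]
        refine Finset.sum_congr rfl fun p1 _ => ?_
        congr 1
        refine Finset.sum_congr rfl fun l _ => ?_
        rw [Finset.mul_sum]
        exact Finset.sum_congr rfl fun l' _ => by ring
      calc (∑ q1, e m' q1 * ∑ p1, conj (e m p1) *
              ∑ l, ∑ l', (c l * e l p1 * conj (c l' * e l' q1)) * A l l')
          = ∑ q1, e m' q1 * ∑ l', conj (e l' q1) * (c m * conj (c l') * A m l') := by
            refine Finset.sum_congr rfl fun q1 _ => ?_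
            rw [step1 q1]
            congr 1
            exact Finset.sum_congr rfl fun l' _ => by simp only [_root_.map_mul]; ring
        _ = c m * conj (c m') * A m m' := h2 _ m'
    have hMF := contract (fun l l' => (M (F l l')) t t')
    have hG2 := contract (fun l l' => (G l l') t t')
    have : c m * conj (c m') * (M (F m m')) t t' = c m * conj (c m') * (G m m') t t' := by
      rw [← hMF, ← hG2]
      exact Finset.sum_congr rfl fun q1 _ => by
        rw [Finset.mul_sum, Finset.mul_sum]
        exact Finset.sum_congr rfl fun p1 _ => by rw [hentry p1 q1]
    have hcc : c m * conj (c m') ≠ 0 :=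
      mul_ne_zero (hc m) (by rw [ne_eq, starRingEnd_apply, star_eq_zero]; exact hc m')
    exact mul_left_cancel₀ hcc this
  · intro h
    ext p q
    rw [hLHS p q, hRHS p q]
    refine Finset.sum_congr rfl fun l _ => Finset.sum_congr rfl fun l' _ => ?_
    rw [h l l']


/-- a channel acting trivially on `R` achieves exact merging of
`|ψ⟩ = Σ √λ_l |l⟩^R ⊗ |ψ_l⟩` iff it maps every block `|ψ_l⟩⟨ψ_{l'}| ⊗ Φ` to
`|ψ'_l⟩⟨ψ'_{l'}| ⊗ Φ'`; in particular iff it achieves merging of the corresponding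
maximally entangled state. -/
theorem stmt15 {Rt AB X AB' X' : Type*}
    [Fintype Rt] [DecidableEq Rt] [Fintype AB] [DecidableEq AB]
    [Fintype X] [DecidableEq X] [Fintype AB'] [DecidableEq AB']
    [Fintype X'] [DecidableEq X']
    (D : ℕ) (hD : 0 < D)
    (lam : Fin D → ℝ) (hlam : ∀ l, 0 < lam l) (hsum : ∑ l, lam l = 1)
    (e : Fin D → Rt → ℂ)
    (he : ∀ l l', ∑ r, conj (e l r) * e l' r = if l = l' then 1 else 0)
    (f : Fin D → AB → ℂ)
    (hf : ∀ l l', ∑ s, conj (f l s) * f l' s = if l = l' then 1 else 0)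
    (g : Fin D → AB' → ℂ)
    (hg : ∀ l l', ∑ t, conj (g l t) * g l' t = if l = l' then 1 else 0)
    (Φ : Matrix X X ℂ) (hΦ : Φ.PosSemidef) (hΦ1 : Φ.trace = 1)
    (Φ' : Matrix X' X' ℂ) (hΦ' : Φ'.PosSemidef) (hΦ'1 : Φ'.trace = 1)
    (M : Matrix (AB × X) (AB × X) ℂ →ₗ[ℂ] Matrix (AB' × X') (AB' × X') ℂ) :
    ((idTensor M (Matrix.of fun p q : Rt × (AB × X) =>
        (∑ l, ((Real.sqrt (lam l) : ℝ) : ℂ) * e l p.1 * f l p.2.1) *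
          conj (∑ l, ((Real.sqrt (lam l) : ℝ) : ℂ) * e l q.1 * f l q.2.1) *
          Φ p.2.2 q.2.2) =
      Matrix.of fun p q : Rt × (AB' × X') =>
        (∑ l, ((Real.sqrt (lam l) : ℝ) : ℂ) * e l p.1 * g l p.2.1) *
          conj (∑ l, ((Real.sqrt (lam l) : ℝ) : ℂ) * e l q.1 * g l q.2.1) *
          Φ' p.2.2 q.2.2) ↔
      ∀ l l', M (Matrix.of fun s s' : AB × X => f l s.1 * conj (f l' s'.1) * Φ s.2 s'.2) =
        Matrix.of fun t t' : AB' × X' => g l t.1 * conj (g l' t'.1) * Φ' t.2 t'.2) ∧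
    ((idTensor M (Matrix.of fun p q : Rt × (AB × X) =>
        (∑ l, ((Real.sqrt (lam l) : ℝ) : ℂ) * e l p.1 * f l p.2.1) *
          conj (∑ l, ((Real.sqrt (lam l) : ℝ) : ℂ) * e l q.1 * f l q.2.1) *
          Φ p.2.2 q.2.2) =
      Matrix.of fun p q : Rt × (AB' × X') =>
        (∑ l, ((Real.sqrt (lam l) : ℝ) : ℂ) * e l p.1 * g l p.2.1) *
          conj (∑ l, ((Real.sqrt (lam l) : ℝ) : ℂ) * e l q.1 * g l q.2.1) *
          Φ' p.2.2 q.2.2) ↔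
      (idTensor M (Matrix.of fun p q : Rt × (AB × X) =>
        (((Real.sqrt D : ℝ) : ℂ)⁻¹ * ∑ l, e l p.1 * f l p.2.1) *
          conj (((Real.sqrt D : ℝ) : ℂ)⁻¹ * ∑ l, e l q.1 * f l q.2.1) *
          Φ p.2.2 q.2.2) =
      Matrix.of fun p q : Rt × (AB' × X') =>
        (((Real.sqrt D : ℝ) : ℂ)⁻¹ * ∑ l, e l p.1 * g l p.2.1) *
          conj (((Real.sqrt D : ℝ) : ℂ)⁻¹ * ∑ l, e l q.1 * g l q.2.1) *
          Φ' p.2.2 q.2.2)) := by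
  have hc1 : ∀ l, ((Real.sqrt (lam l) : ℝ) : ℂ) ≠ 0 := fun l =>
    Complex.ofReal_ne_zero.mpr (Real.sqrt_pos.mpr (hlam l)).ne'
  have hc2 : ∀ _l : Fin D, (((Real.sqrt D : ℝ) : ℂ))⁻¹ ≠ 0 := fun _ =>
    inv_ne_zero (Complex.ofReal_ne_zero.mpr
      (Real.sqrt_pos.mpr (by exact_mod_cast hD)).ne')
  have h1 := key_lemma D (fun l => ((Real.sqrt (lam l) : ℝ) : ℂ)) hc1 e he f g Φ Φ' M
  have h2 := key_lemma D (fun _ => (((Real.sqrt D : ℝ) : ℂ))⁻¹) hc2 e he f g Φ Φ' M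
  refine ⟨h1, ?_⟩
  have hrw1 : (Matrix.of fun p q : Rt × (AB × X) =>
      (((Real.sqrt D : ℝ) : ℂ)⁻¹ * ∑ l, e l p.1 * f l p.2.1) *
        conj (((Real.sqrt D : ℝ) : ℂ)⁻¹ * ∑ l, e l q.1 * f l q.2.1) * Φ p.2.2 q.2.2)
      = Matrix.of fun p q : Rt × (AB × X) =>
      (∑ l, (((Real.sqrt D : ℝ) : ℂ))⁻¹ * e l p.1 * f l p.2.1) *
        conj (∑ l, (((Real.sqrt D : ℝ) : ℂ))⁻¹ * e l q.1 * f l q.2.1) * Φ p.2.2 q.2.2 := by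
    ext p q
    simp only [Matrix.of_apply, Finset.mul_sum, mul_assoc]
  have hrw2 : (Matrix.of fun p q : Rt × (AB' × X') =>
      (((Real.sqrt D : ℝ) : ℂ)⁻¹ * ∑ l, e l p.1 * g l p.2.1) *
        conj (((Real.sqrt D : ℝ) : ℂ)⁻¹ * ∑ l, e l q.1 * g l q.2.1) * Φ' p.2.2 q.2.2)
      = Matrix.of fun p q : Rt × (AB' × X') =>
      (∑ l, (((Real.sqrt D : ℝ) : ℂ))⁻¹ * e l p.1 * g l p.2.1) *
        conj (∑ l, (((Real.sqrt D : ℝ) : ℂ))⁻¹ * e l q.1 * g l q.2.1) * Φ' p.2.2 q.2.2 := by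
    ext p q
    simp only [Matrix.of_apply, Finset.mul_sum, mul_assoc]
  rw [hrw1, hrw2]
  exact h1.trans h2.symm
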